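/- Let S be a monoid such that for every set I and every ultrafilter Φ on I, the ultrapower S^I/Φ of the left S-act S is projective. Then S satisfies condition (M^L): for every sequence (aₙ) in S with Sa₁ ⊆ Sa₂ ⊆ Sa₃ ⊆ ⋯, there exists N such that Saₙ = Sa_N for all n ≥ N. -/

import Mathlib

universe u

/-- A left `S`-act `P` is projective if every `S`-morphism from `P` to `N`
lifts along any surjective `S`-morphism `M → N`. -/
def IsProjectiveAct (S : Type u) [Monoid S] (P : Type u) [MulAction S P] : Prop :=
  ∀ (M N : Type u) [MulAction S M] [MulAction S N] (φ : M → N) (θ : P → N),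
    (∀ (s : S) (m : M), φ (s • m) = s • φ m) → Function.Surjective φ →
    (∀ (s : S) (p : P), θ (s • p) = s • θ p) →
    ∃ ψ : P → M, (∀ (s : S) (p : P), ψ (s • p) = s • ψ p) ∧ ∀ p, φ (ψ p) = θ p

/-- The free `S`-act on the carrier of `P`: pairs `(p, t)` with action
`s • (p, t) = (p, s * t)`.  Used as the domain of the canonical free cover
`(p, t) ↦ t • p`. -/
structure FreeCoverAct (S : Type u) (P : Type u) : Type u where
  pt : P
  coeff : S

namespace FreeCoverAct

variable {S P : Type u} [Monoid S]

instance : SMul S (FreeCoverAct S P) :=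
  ⟨fun s x => ⟨x.pt, s * x.coeff⟩⟩

@[simp] theorem smul_pt (s : S) (x : FreeCoverAct S P) : (s • x).pt = x.pt := rfl

@[simp] theorem smul_coeff (s : S) (x : FreeCoverAct S P) :
    (s • x).coeff = s * x.coeff := rfl

instance : MulAction S (FreeCoverAct S P) where
  one_smul x := by
    cases x with
    | mk p c =>
      show (⟨p, 1 * c⟩ : FreeCoverAct S P) = ⟨p, c⟩
      rw [one_mul]
  mul_smul s t x := by
    cases x with
    | mk p c =>
      show (⟨p, s * t * c⟩ : FreeCoverAct S P) = ⟨p, s * (t * c)⟩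
      rw [mul_assoc]

end FreeCoverAct

/-- if every ultrapower `S^I/Φ` of the left `S`-act `S` is
projective, then `S` satisfies (M^L): every ascending chain of principal left
ideals `Sa₁ ⊆ Sa₂ ⊆ ⋯` stabilizes. -/
theorem stmt_8 {S : Type u} [Monoid S]
    (h : ∀ (I : Type u) (Φ : Ultrafilter I), IsProjectiveAct S (Filter.Germ (Φ : Filter I) S))
    (a : ℕ → S)
    (ha : ∀ n : ℕ, Set.range (fun x => x * a n) ⊆ Set.range (fun x => x * a (n + 1))) :
    ∃ N : ℕ, ∀ n ≥ N, Set.range (fun x => x * a n) = Set.range (fun x => x * a N) := by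
  classical
  by_contra hcontra
  push_neg at hcontra
  -- hcontra : ∀ N, ∃ n, n ≥ N ∧ ranges differ
  -- monotonicity of the chain of ranges
  have Rm : ∀ m n : ℕ, m ≤ n →
      Set.range (fun x => x * a m) ⊆ Set.range (fun x => x * a n) := by
    intro m n hmn
    induction n, hmn using Nat.le_induction with
    | base => exact subset_rfl
    | succ n hmn ih => exact ih.trans (ha n)
  have hstep : ∀ N : ℕ, ∃ n : ℕ, N < n ∧
      Set.range (fun x => x * a n) ≠ Set.range (fun x => x * a N) := by
    intro N
    obtain ⟨n, hn, hne⟩ := hcontra N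
    refine ⟨n, lt_of_le_of_ne hn ?_, hne⟩
    intro hNe
    exact hne (by rw [hNe])
  -- strictly increasing subsequence
  let ν : ℕ → ℕ := fun j =>
    Nat.rec (motive := fun _ => ℕ) 0 (fun _ prev => (hstep prev).choose) j
  have hν : ∀ j : ℕ, ν j < ν (j + 1) ∧
      Set.range (fun x => x * a (ν (j + 1))) ≠ Set.range (fun x => x * a (ν j)) := by
    intro j
    exact (hstep (ν j)).choose_spec
  have νmono : StrictMono ν := strictMono_nat_of_lt_succ fun j => (hν j).1
  let b : ℕ → S := fun j => a (ν j)
  have Rb : ∀ j j' : ℕ, j ≤ j' →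
      Set.range (fun x => x * b j) ⊆ Set.range (fun x => x * b j') :=
    fun j j' hj => Rm (ν j) (ν j') (νmono.monotone hj)
  -- strictness
  have bstrict : ∀ (j : ℕ) (v : S), v * b j ≠ b (j + 1) := by
    intro j v heq
    apply (hν j).2
    apply Set.Subset.antisymm
    · rintro y ⟨x, hx⟩
      refine ⟨x * v, ?_⟩
      show x * v * b j = y
      rw [mul_assoc, heq]
      exact hx
    · exact Rb j (j + 1) (Nat.le_succ j)
  have binj : Function.Injective b := by
    intro j j' heq
    by_contra hne
    rcases Nat.lt_or_ge j j' with hlt | hge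
    · -- b (j+1) ∈ S b j, contradiction
      have h1 : b (j + 1) ∈ Set.range (fun x => x * b (j + 1)) := ⟨1, one_mul _⟩
      have h2 : Set.range (fun x => x * b (j + 1)) ⊆ Set.range (fun x => x * b j) := by
        have := Rb (j + 1) j' hlt
        rw [← heq] at this
        exact this
      obtain ⟨v, hv⟩ := h2 h1
      exact bstrict j v hv
    · have hlt : j' < j := lt_of_le_of_ne hge (fun hh => hne hh.symm)
      have h1 : b (j' + 1) ∈ Set.range (fun x => x * b (j' + 1)) := ⟨1, one_mul _⟩
      have h2 : Set.range (fun x => x * b (j' + 1)) ⊆ Set.range (fun x => x * b j') := by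
        have := Rb (j' + 1) j hlt
        rw [heq] at this
        exact this
      obtain ⟨v, hv⟩ := h2 h1
      exact bstrict j' v hv
  -- witnesses
  have hcw : ∀ j : ℕ, ∃ v : S, v * b (j + 1) = b j := by
    intro j
    have : b j ∈ Set.range (fun x => x * b (j + 1)) :=
      Rb j (j + 1) (Nat.le_succ j) ⟨1, one_mul _⟩
    exact this
  let cw : ℕ → S := fun j => (hcw j).choose
  have hcwspec : ∀ j : ℕ, cw j * b (j + 1) = b j := fun j => (hcw j).choose_spec
  -- products of witnesses: go m k = cw k * cw (k+1) * ⋯ * cw (k+m-1)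
  let go : ℕ → ℕ → S := fun m =>
    Nat.rec (motive := fun _ => ℕ → S) (fun _ => 1)
      (fun _ ih k => cw k * ih (k + 1)) m
  have goS : ∀ (m k : ℕ), go (m + 1) k = cw k * go m (k + 1) := fun _ _ => rfl
  have E1 : ∀ (m k : ℕ), go m k * b (k + m) = b k := by
    intro m
    induction m with
    | zero =>
      intro k
      show (1 : S) * b (k + 0) = b k
      rw [Nat.add_zero, one_mul]
    | succ m ih =>
      intro k
      rw [goS]
      have harith : k + (m + 1) = (k + 1) + m := by omega
      rw [harith, mul_assoc, ih (k + 1), hcwspec k]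
  -- the ultrafilter on finite subsets of S
  haveI hne : (Filter.atTop : Filter (Finset S)).NeBot := Filter.atTop_neBot
  let Φ : Ultrafilter (Finset S) := Ultrafilter.of Filter.atTop
  have hΦle : (↑Φ : Filter (Finset S)) ≤ Filter.atTop := Ultrafilter.of_le _
  have hUp : ∀ x : S, {p : Finset S | x ∈ p} ∈ (↑Φ : Filter (Finset S)) := by
    intro x
    refine hΦle ?_
    rw [Filter.mem_atTop_sets]
    exact ⟨{x}, fun q hq => Finset.singleton_subset_iff.mp hq⟩
  have hCard : ∀ m : ℕ, {p : Finset S | m ≤ p.card} ∈ (↑Φ : Filter (Finset S)) := by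
    intro m
    refine hΦle ?_
    rw [Filter.mem_atTop_sets]
    refine ⟨(Finset.range m).image b, fun q hq => ?_⟩
    have h1 : ((Finset.range m).image b).card = m := by
      rw [Finset.card_image_of_injective _ binj, Finset.card_range]
    calc m = ((Finset.range m).image b).card := h1.symm
      _ ≤ q.card := Finset.card_le_card hq
  -- projectivity: split the free cover
  let G := Filter.Germ (↑Φ : Filter (Finset S)) S
  let φc : FreeCoverAct S G → G := fun m => m.coeff • m.pt
  have hφe : ∀ (s : S) (m : FreeCoverAct S G), φc (s • m) = s • φc m := by
    intro s m
    show (s • m).coeff • (s • m).pt = s • (m.coeff • m.pt)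
    rw [FreeCoverAct.smul_coeff, FreeCoverAct.smul_pt, mul_smul]
  have hφs : Function.Surjective φc := by
    intro p
    refine ⟨⟨p, 1⟩, ?_⟩
    show (1 : S) • p = p
    rw [one_smul]
  have hθe : ∀ (s : S) (p : G), id (s • p) = s • id p := fun _ _ => rfl
  obtain ⟨ψ, hψe, hψs⟩ :=
    h (Finset S) Φ (FreeCoverAct S G) G φc id hφe hφs hθe
  let xm : Filter.Germ (↑Φ : Filter (Finset S)) S → Filter.Germ (↑Φ : Filter (Finset S)) S :=
    fun p => (ψ p).pt
  let wm : Filter.Germ (↑Φ : Filter (Finset S)) S → S := fun p => (ψ p).coeff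
  have xinv : ∀ (s : S) (p : Filter.Germ (↑Φ : Filter (Finset S)) S),
      xm (s • p) = xm p := by
    intro s p
    show (ψ (s • p)).pt = (ψ p).pt
    rw [hψe s p]
    rfl
  have sec : ∀ p : Filter.Germ (↑Φ : Filter (Finset S)) S, wm p • xm p = p :=
    fun p => hψs p
  -- the germs of witness products
  let Qf : ℕ → Finset S → S := fun k p => go (p.card - k) k
  have hchain : ∀ k : ℕ,
      (↑(Qf k) : Filter.Germ (↑Φ : Filter (Finset S)) S) = cw k • (↑(Qf (k + 1))) := by
    intro k
    rw [← Filter.Germ.coe_smul]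
    refine Filter.Germ.coe_eq.mpr ?_
    have hv : ∀ᶠ p in (↑Φ : Filter (Finset S)), k + 1 ≤ p.card :=
      Filter.eventually_iff.mpr (hCard (k + 1))
    refine hv.mono (fun p hp => ?_)
    show Qf k p = (cw k • Qf (k + 1)) p
    have h1 : (cw k • Qf (k + 1)) p = cw k * Qf (k + 1) p := rfl
    rw [h1]
    show go (p.card - k) k = cw k * go (p.card - (k + 1)) (k + 1)
    have h2 : p.card - k = (p.card - (k + 1)) + 1 := by omega
    rw [h2, goS]
  have xchain : ∀ k : ℕ,
      xm (↑(Qf k)) = xm (↑(Qf 0)) := by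
    intro k
    induction k with
    | zero => rfl
    | succ k ih =>
      rw [← ih, hchain k, xinv]
  let ξ : Filter.Germ (↑Φ : Filter (Finset S)) S := xm (↑(Qf 0))
  obtain ⟨r, hr⟩ : ∃ r : Finset S → S,
      (↑r : Filter.Germ (↑Φ : Filter (Finset S)) S) = ξ :=
    Filter.Germ.inductionOn ξ (fun f => ⟨f, rfl⟩)
  let u : ℕ → S := fun k => wm (↑(Qf k))
  have hQu : ∀ k : ℕ, ∀ᶠ p in (↑Φ : Filter (Finset S)), Qf k p = u k * r p := by
    intro k
    have h1 : (↑(Qf k) : Filter.Germ (↑Φ : Filter (Finset S)) S) = ↑(u k • r) := by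
      rw [Filter.Germ.coe_smul, hr]
      have h2 := sec (↑(Qf k) : Filter.Germ (↑Φ : Filter (Finset S)) S)
      rw [xchain k] at h2
      exact h2.symm
    have h3 := Filter.Germ.coe_eq.mp h1
    exact h3.mono (fun p hp => hp)
  have hAll : ∀ m : ℕ, ∀ᶠ p in (↑Φ : Filter (Finset S)),
      ∀ k, k ≤ m → Qf k p = u k * r p := by
    intro m
    induction m with
    | zero =>
      refine (hQu 0).mono (fun p hp k hk => ?_)
      obtain rfl : k = 0 := Nat.le_zero.mp hk
      exact hp
    | succ m ih =>
      refine (ih.and (hQu (m + 1))).mono (fun p hp k hk => ?_)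
      rcases eq_or_lt_of_le hk with hk' | hk'
      · subst hk'
        exact hp.2
      · exact hp.1 k (Nat.lt_succ_iff.mp hk')
  have exists_deep : ∀ m : ℕ, ∃ p : Finset S,
      m ≤ p.card ∧ ∀ k, k ≤ m → Qf k p = u k * r p := by
    intro m
    exact ((Filter.eventually_iff.mpr (hCard m)).and (hAll m)).exists
  -- the ladder of deep finsets
  let jj : ℕ → Finset S := fun n =>
    Nat.rec (motive := fun _ => Finset S) (exists_deep 0).choose
      (fun _ prev => (exists_deep (prev.card + 1)).choose) n
  let lev : ℕ → ℕ := fun n => (jj n).card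
  have jjSdef : ∀ n : ℕ, jj (n + 1) = (exists_deep ((jj n).card + 1)).choose :=
    fun _ => rfl
  have jjspec : ∀ n : ℕ, lev n + 1 ≤ lev (n + 1) ∧
      ∀ k, k ≤ lev n + 1 → Qf k (jj (n + 1)) = u k * r (jj (n + 1)) := by
    intro n
    have h1 := (exists_deep ((jj n).card + 1)).choose_spec
    rw [← jjSdef n] at h1
    exact h1
  have levmono : StrictMono lev :=
    strictMono_nat_of_lt_succ fun n => Nat.lt_of_succ_le (jjspec n).1
  have jjA0 : ∀ n : ℕ, Qf 0 (jj n) = u 0 * r (jj n) := by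
    intro n
    cases n with
    | zero => exact (exists_deep 0).choose_spec.2 0 (le_refl 0)
    | succ n => exact (jjspec n).2 0 (Nat.zero_le _)
  have jjA' : ∀ n n' : ℕ, n < n' →
      Qf (lev n + 1) (jj n') = u (lev n + 1) * r (jj n') := by
    intro n n' hlt
    obtain ⟨m, rfl⟩ : ∃ m, n' = m + 1 := ⟨n' - 1, by omega⟩
    refine (jjspec m).2 _ ?_
    have hle : lev n ≤ lev m := levmono.monotone (Nat.lt_succ_iff.mp hlt)
    omega
  have key0 : ∀ n : ℕ, u 0 * (r (jj n) * b (lev n)) = b 0 := by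
    intro n
    rw [← mul_assoc, ← jjA0 n]
    show go ((jj n).card - 0) 0 * b (lev n) = b 0
    rw [Nat.sub_zero]
    have := E1 (lev n) 0
    rwa [Nat.zero_add] at this
  -- coding of subsets of S
  let code : Set S → Finset S → ℕ := fun X p =>
    (p.powerset.toList).idxOf (p.filter (fun y => y ∈ X))
  have codeNe : ∀ X Y : Set S, X ≠ Y →
      ∃ x : S, ∀ p : Finset S, x ∈ p → code X p ≠ code Y p := by
    intro X Y hXY
    have hex : ∃ x, ¬(x ∈ X ↔ x ∈ Y) := by
      by_contra hc
      push_neg at hc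
      exact hXY (Set.ext fun x => (hc x))
    obtain ⟨x, hx⟩ := hex
    refine ⟨x, fun p hp hcode => ?_⟩
    have hmem1 : p.filter (fun y => y ∈ X) ∈ p.powerset.toList := by
      rw [Finset.mem_toList, Finset.mem_powerset]
      exact Finset.filter_subset _ _
    have hmem2 : p.filter (fun y => y ∈ Y) ∈ p.powerset.toList := by
      rw [Finset.mem_toList, Finset.mem_powerset]
      exact Finset.filter_subset _ _
    have heqf := (List.idxOf_inj hmem1).mp hcode
    apply hx
    constructor
    · intro hmX
      have : x ∈ p.filter (fun y => y ∈ X) := Finset.mem_filter.mpr ⟨hp, hmX⟩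
      rw [heqf] at this
      exact (Finset.mem_filter.mp this).2
    · intro hmY
      have : x ∈ p.filter (fun y => y ∈ Y) := Finset.mem_filter.mpr ⟨hp, hmY⟩
      rw [← heqf] at this
      exact (Finset.mem_filter.mp this).2
  -- the diagonal germs
  let fZ : Set S → Finset S → S := fun X p =>
    r (jj (code X p)) * b (lev (code X p))
  have hZ0 : ∀ X : Set S,
      u 0 • (↑(fZ X) : Filter.Germ (↑Φ : Filter (Finset S)) S) =
        (↑(fun _ : Finset S => b 0) : Filter.Germ (↑Φ : Filter (Finset S)) S) := by
    intro X
    rw [← Filter.Germ.coe_smul]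
    have hfun : u 0 • fZ X = (fun _ : Finset S => b 0) := by
      funext p
      show u 0 * fZ X p = b 0
      exact key0 (code X p)
    rw [hfun]
  let Ξ : Filter.Germ (↑Φ : Filter (Finset S)) S :=
    xm (↑(fun _ : Finset S => b 0))
  let W : Set S → S := fun X => wm (↑(fZ X))
  have hZrep : ∀ X : Set S,
      (↑(fZ X) : Filter.Germ (↑Φ : Filter (Finset S)) S) = W X • Ξ := by
    intro X
    have h1 : xm (↑(fZ X) : Filter.Germ (↑Φ : Filter (Finset S)) S) = Ξ := by
      have h2 := xinv (u 0) (↑(fZ X) : Filter.Germ (↑Φ : Filter (Finset S)) S)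
      rw [hZ0 X] at h2
      exact h2.symm
    have h3 := sec (↑(fZ X) : Filter.Germ (↑Φ : Filter (Finset S)) S)
    rw [h1] at h3
    exact h3.symm
  -- Cantor: W cannot be injective
  obtain ⟨X, Y, hWXY, hXY⟩ := Function.not_injective_iff.mp (Function.cantor_injective W)
  have hZeq : (↑(fZ X) : Filter.Germ (↑Φ : Filter (Finset S)) S) = ↑(fZ Y) := by
    rw [hZrep X, hZrep Y]
    show W X • Ξ = W Y • Ξ
    rw [hWXY]
  have hEv : ∀ᶠ p in (↑Φ : Filter (Finset S)), fZ X p = fZ Y p :=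
    Filter.Germ.coe_eq.mp hZeq
  obtain ⟨x, hxcode⟩ := codeNe X Y hXY
  have hUpx : ∀ᶠ p in (↑Φ : Filter (Finset S)), x ∈ p :=
    Filter.eventually_iff.mpr (hUp x)
  obtain ⟨p, hvp, hxp⟩ := (hEv.and hUpx).exists
  have hcne : code X p ≠ code Y p := hxcode p hxp
  -- the final collision argument
  have collide : ∀ n n' : ℕ, n < n' →
      r (jj n) * b (lev n) = r (jj n') * b (lev n') → False := by
    intro n n' hlt veq
    have h1 : lev n + 1 ≤ lev n' := Nat.succ_le_of_lt (levmono hlt)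
    have h2 := jjA' n n' hlt
    have h3 : u (lev n + 1) * (r (jj n') * b (lev n')) = b (lev n + 1) := by
      rw [← mul_assoc, ← h2]
      show go ((jj n').card - (lev n + 1)) (lev n + 1) * b (lev n') = b (lev n + 1)
      have harith : (lev n + 1) + ((jj n').card - (lev n + 1)) = lev n' := by
        have : lev n' = (jj n').card := rfl
        omega
      have h4 := E1 ((jj n').card - (lev n + 1)) (lev n + 1)
      rwa [harith] at h4
    rw [← veq, ← mul_assoc] at h3
    exact bstrict (lev n) (u (lev n + 1) * r (jj n)) h3
  rcases Nat.lt_or_ge (code X p) (code Y p) with hlt | hge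
  · exact collide _ _ hlt hvp
  · have hlt : code Y p < code X p := lt_of_le_of_ne hge (Ne.symm hcne)
    exact collide _ _ hlt hvp.symm
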